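/- Let (α, u₁, …, u_n) ∈ (0, ∞)^{n+1} be a positive solution of the discrete system (S). If the function g := g₁/g₂ is surjective from (0, ∞) onto (0, ∞) and strictly decreasing on (0, ∞), then u_n < e^M · u₁, where M := g₁'(g⁻¹(α)) and g⁻¹ : (0, ∞) → (0, ∞) denotes the inverse function of g. -/

import Mathlib

open Finset

noncomputable def U (g1 : ℝ → ℝ) (h : ℝ) : ℕ → ℝ → ℝ
  | 0, u => u
  | 1, u => u
  | 2, u => u + h ^ 2 / 2 * g1 u
  | k + 3, u => 2 * U g1 h (k + 2) u - U g1 h (k + 1) u + h ^ 2 * g1 (U g1 h (k + 2) u)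

/-- `(α, u 1, …, u n)` is a positive solution of the discrete system (S). -/
def IsSolution (g1 g2 : ℝ → ℝ) (n : ℕ) (h α : ℝ) (u : ℕ → ℝ) : Prop :=
  (∀ k, 1 ≤ k → k ≤ n → 0 < u k) ∧
  u 2 - u 1 = h ^ 2 / 2 * g1 (u 1) ∧
  (∀ k, 2 ≤ k → k ≤ n - 1 → u (k + 1) - 2 * u k + u (k - 1) = h ^ 2 * g1 (u k)) ∧
  u n - u (n - 1) + h ^ 2 / 2 * g1 (u n) = h * α * g2 (u n)

set_option maxHeartbeats 2000000 in
theorem stmt14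
    (g1 g2 : ℝ → ℝ)
    (hg1C : ContDiff ℝ 3 g1) (hg2C : ContDiff ℝ 3 g2)
    (hg1A : AnalyticAt ℝ g1 0) (hg2A : AnalyticAt ℝ g2 0)
    (hg10 : g1 0 = 0) (hg20 : g2 0 = 0)
    (hg1d1 : ∀ x > 0, 0 < deriv g1 x) (hg2d1 : ∀ x > 0, 0 < deriv g2 x)
    (hg1d2 : ∀ x > 0, 0 < iteratedDeriv 2 g1 x) (hg2d2 : ∀ x > 0, 0 < iteratedDeriv 2 g2 x)
    (hg1d3 : ∀ x > 0, 0 ≤ iteratedDeriv 3 g1 x) (hg2d3 : ∀ x > 0, 0 ≤ iteratedDeriv 3 g2 x)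
    (n : ℕ) (hn : 2 ≤ n) (h : ℝ) (hh : h = 1 / ((n : ℝ) - 1))
    (α : ℝ) (hα : 0 < α) (u : ℕ → ℝ)
    (hsol : IsSolution g1 g2 n h α u)
    (hsurj : ∀ y > (0 : ℝ), ∃ x > (0 : ℝ), g1 x / g2 x = y)
    (hdec : StrictAntiOn (fun x => g1 x / g2 x) (Set.Ioi 0))
    (ginv : ℝ → ℝ)
    (hginv1 : ∀ x > (0 : ℝ), ginv (g1 x / g2 x) = x)
    (hginv2 : ∀ y > (0 : ℝ), 0 < ginv y ∧ g1 (ginv y) / g2 (ginv y) = y)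
    :
    u n < Real.exp (deriv g1 (ginv α)) * u 1 := by
  obtain ⟨hupos, heq1, heqmid, heqn⟩ := hsol
  have hn2 : (2:ℝ) ≤ (n:ℝ) := by exact_mod_cast hn
  have hn1 : (0:ℝ) < (n:ℝ) - 1 := by linarith
  have hhpos : 0 < h := by rw [hh]; positivity
  have hmul : h * ((n:ℝ) - 1) = 1 := by rw [hh]; field_simp
  -- g1 strictly increasing on [0, ∞), hence positive on (0, ∞); same for g2
  have hg1mono : StrictMonoOn g1 (Set.Ici 0) := by
    apply strictMonoOn_of_deriv_pos (convex_Ici 0) hg1C.continuous.continuousOn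
    intro x hx
    rw [interior_Ici] at hx
    exact hg1d1 x hx
  have hg2mono : StrictMonoOn g2 (Set.Ici 0) := by
    apply strictMonoOn_of_deriv_pos (convex_Ici 0) hg2C.continuous.continuousOn
    intro x hx
    rw [interior_Ici] at hx
    exact hg2d1 x hx
  have hg1pos : ∀ x > (0:ℝ), 0 < g1 x := by
    intro x hx
    have := hg1mono (Set.self_mem_Ici) (Set.mem_Ici.2 hx.le) hx
    rwa [hg10] at this
  have hg2pos : ∀ x > (0:ℝ), 0 < g2 x := by
    intro x hx
    have := hg2mono (Set.self_mem_Ici) (Set.mem_Ici.2 hx.le) hx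
    rwa [hg20] at this
  -- deriv g1 strictly increasing on [0, ∞)
  have hd1mono : StrictMonoOn (deriv g1) (Set.Ici 0) := by
    apply strictMonoOn_of_deriv_pos (convex_Ici 0)
      (hg1C.continuous_deriv (by norm_num)).continuousOn
    intro x hx
    rw [interior_Ici] at hx
    have h2 := hg1d2 x hx
    rwa [iteratedDeriv_succ, iteratedDeriv_one] at h2
  obtain ⟨hcpos, hcval⟩ := hginv2 α hα
  set c := ginv α with hc
  set M := deriv g1 c with hM
  have hMpos : 0 < M := hg1d1 c hcpos
  -- linear bound: g1 x < M * x whenever 0 < x < c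
  have key_lin : ∀ x : ℝ, 0 < x → x < c → g1 x < M * x := by
    intro x hx hxc
    obtain ⟨d, hd, hslope⟩ := exists_hasDerivAt_eq_slope g1 (deriv g1) hx
      hg1C.continuous.continuousOn
      (fun y _ => ((hg1C.differentiable (by norm_num)) y).hasDerivAt)
    have hgx : g1 x = deriv g1 d * x := by
      rw [hslope, hg10]
      field_simp
      simp [hx.ne']
    have hdM : deriv g1 d < M := by
      apply hd1mono (Set.mem_Ici.2 hd.1.le) (Set.mem_Ici.2 hcpos.le)
      exact lt_trans hd.2 hxc
    rw [hgx]
    exact mul_lt_mul_of_pos_right hdM hx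
  -- partial sums
  set S : ℕ → ℝ := fun k => g1 (u 1) / 2 + ∑ j ∈ Finset.Icc 2 k, g1 (u j) with hS
  -- difference formula and strict monotonicity of steps
  have hdiff : ∀ k, 1 ≤ k → k ≤ n - 1 → u (k+1) - u k = h^2 * S k ∧ u k < u (k+1) := by
    intro k hk
    induction k, hk using Nat.le_induction with
    | base =>
      intro _
      have hS1 : S 1 = g1 (u 1) / 2 := by
        simp [hS, Finset.Icc_eq_empty (by norm_num : ¬ (2:ℕ) ≤ 1)]
      have hu1 : 0 < u 1 := hupos 1 le_rfl (by omega)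
      constructor
      · rw [hS1, heq1]; ring
      · have hg := hg1pos (u 1) hu1
        have e : u (1+1) = u 2 := by norm_num
        rw [e]
        nlinarith [heq1, mul_pos (pow_pos hhpos 2) hg]
    | succ k hk ih =>
      intro hkn
      have hkn' : k ≤ n - 1 := by omega
      obtain ⟨ihf, ihlt⟩ := ih hkn'
      have hmid := heqmid (k+1) (by omega) hkn
      have hkm : k + 1 - 1 = k := by omega
      rw [hkm] at hmid
      have huk1 : 0 < u (k+1) := hupos (k+1) (by omega) (by omega)
      have hgk1 : 0 < g1 (u (k+1)) := hg1pos _ huk1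
      have hSsucc : S (k+1) = S k + g1 (u (k+1)) := by
        simp only [hS]
        rw [Finset.sum_Icc_succ_top (by omega : 2 ≤ k + 1)]
        ring
      constructor
      · rw [hSsucc]
        nlinarith [ihf, hmid]
      · nlinarith [ihf, hmid, sq_nonneg h, hhpos.le,
          mul_pos (mul_pos hhpos hhpos) hgk1]
  have hstep : ∀ k, 1 ≤ k → k ≤ n - 1 → u k < u (k+1) := fun k h1 h2 => (hdiff k h1 h2).2
  -- monotonicity
  have humono : ∀ j k, 1 ≤ j → j ≤ k → k ≤ n → u j ≤ u k := by
    intro j k h1 hjk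
    induction k, hjk using Nat.le_induction with
    | base => intro _; exact le_rfl
    | succ k hk ih =>
      intro hkn
      have h1k : 1 ≤ k := le_trans h1 hk
      exact le_trans (ih (by omega)) (hstep k h1k (by omega)).le
  have hu1pos : 0 < u 1 := hupos 1 le_rfl (by omega)
  have hunpos : 0 < u n := hupos n (by omega) le_rfl
  have hu1n : u 1 < u n := lt_of_lt_of_le (hstep 1 le_rfl (by omega)) (humono 2 n (by omega) (by omega) le_rfl)
  -- boundary identity
  have hnm1 : n - 1 + 1 = n := by omega
  obtain ⟨hdn, _⟩ := hdiff (n-1) (by omega) le_rfl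
  rw [hnm1] at hdn
  -- α g2(u n) < g1(u n)
  have hSn_bound : S (n-1) + g1 (u n) / 2 < ((n:ℝ) - 1) * g1 (u n) := by
    have hsum : ∑ j ∈ Finset.Icc 2 (n-1), g1 (u j) ≤ ((n:ℝ) - 2) * g1 (u n) := by
      have hb : ∀ j ∈ Finset.Icc 2 (n-1), g1 (u j) ≤ g1 (u n) := by
        intro j hj
        rw [Finset.mem_Icc] at hj
        rcases eq_or_lt_of_le (humono j n (by omega) (by omega) le_rfl) with hjn | hjn
        · rw [hjn]
        · exact (hg1mono (Set.mem_Ici.2 (hupos j (by omega) (by omega)).le)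
            (Set.mem_Ici.2 hunpos.le) hjn).le
      have := Finset.sum_le_card_nsmul (Finset.Icc 2 (n-1)) (fun j => g1 (u j)) (g1 (u n)) hb
      rw [Nat.card_Icc] at this
      have hcard : ((n - 1 + 1 - 2 : ℕ) : ℝ) = (n:ℝ) - 2 := by
        have : n - 1 + 1 - 2 = n - 2 := by omega
        rw [this, Nat.cast_sub hn]
        norm_num
      calc ∑ j ∈ Finset.Icc 2 (n-1), g1 (u j) ≤ (n - 1 + 1 - 2 : ℕ) • g1 (u n) := this
        _ = ((n - 1 + 1 - 2 : ℕ) : ℝ) * g1 (u n) := by rw [nsmul_eq_mul]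
        _ = ((n:ℝ) - 2) * g1 (u n) := by rw [hcard]
    have h1n : g1 (u 1) < g1 (u n) :=
      hg1mono (Set.mem_Ici.2 hu1pos.le) (Set.mem_Ici.2 hunpos.le) hu1n
    simp only [hS]
    linarith
  have hαlt : α * g2 (u n) < g1 (u n) := by
    have hb : h * α * g2 (u n) = h^2 * (S (n-1) + g1 (u n) / 2) := by
      rw [← heqn]
      linear_combination hdn
    have hlt : h * α * g2 (u n) < h^2 * (((n:ℝ) - 1) * g1 (u n)) := by
      rw [hb]
      exact mul_lt_mul_of_pos_left hSn_bound (by positivity)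
    have hh2 : h^2 * (((n:ℝ) - 1) * g1 (u n)) = h * g1 (u n) := by
      linear_combination (h * g1 (u n)) * hmul
    rw [hh2] at hlt
    have hlt' : h * (α * g2 (u n)) < h * g1 (u n) := by
      calc h * (α * g2 (u n)) = h * α * g2 (u n) := by ring
        _ < h * g1 (u n) := hlt
    exact lt_of_mul_lt_mul_left hlt' hhpos.le
  have hαg : α < g1 (u n) / g2 (u n) := by
    rw [lt_div_iff₀ (hg2pos _ hunpos)]
    exact hαlt
  -- u n < c
  have hunc : u n < c := by
    by_contra hcon
    push_neg at hcon
    rcases eq_or_lt_of_le hcon with hce | hce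
    · rw [hce] at hcval
      rw [hcval] at hαg
      exact lt_irrefl α hαg
    · have h2 : g1 (u n) / g2 (u n) < g1 c / g2 c :=
        hdec (Set.mem_Ioi.mpr hcpos) (Set.mem_Ioi.mpr hunpos) hce
      rw [hcval] at h2
      exact lt_irrefl α (hαg.trans h2)
  -- Gronwall step
  have hgron : ∀ k, 1 ≤ k → k ≤ n - 1 → u (k+1) < (1 + h * M) * u k := by
    intro k h1 h2
    have hd := (hdiff k h1 h2).1
    have hukpos : 0 < u k := hupos k h1 (by omega)
    have hukn : u k ≤ u n := humono k n h1 (by omega) le_rfl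
    have hbound : ∀ j, 1 ≤ j → j ≤ k → g1 (u j) < M * u j := by
      intro j hj1 hjk
      have hjpos : 0 < u j := hupos j hj1 (by omega)
      exact key_lin (u j) hjpos (lt_of_le_of_lt (le_trans (humono j n hj1 (by omega) le_rfl) (le_refl _)) hunc)
    have hsum : ∑ j ∈ Finset.Icc 2 k, g1 (u j) ≤ ((k:ℝ) - 1) * (M * u k) := by
      have hb : ∀ j ∈ Finset.Icc 2 k, g1 (u j) ≤ M * u k := by
        intro j hj
        rw [Finset.mem_Icc] at hj
        have := hbound j (by omega) hj.2
        have huj : u j ≤ u k := humono j k (by omega) hj.2 (by omega)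
        nlinarith
      have := Finset.sum_le_card_nsmul (Finset.Icc 2 k) (fun j => g1 (u j)) (M * u k) hb
      rw [Nat.card_Icc, nsmul_eq_mul] at this
      rcases Nat.lt_or_ge k 2 with hk2 | hk2
      · interval_cases k
        · simp [Finset.Icc_eq_empty (by norm_num : ¬ (2:ℕ) ≤ 1)]
      · have hcard : ((k + 1 - 2 : ℕ) : ℝ) = (k:ℝ) - 1 := by
          have : k + 1 - 2 = k - 1 := by omega
          rw [this, Nat.cast_sub (by omega)]
          norm_num
        rw [hcard] at this
        exact this
    have hS1 : g1 (u 1) < M * u 1 := hbound 1 le_rfl h1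
    have hu1k : u 1 ≤ u k := humono 1 k le_rfl h1 (by omega)
    have hSbound : S k < M * ((k:ℝ) - 1/2) * u k := by
      simp only [hS]
      nlinarith
    -- h * ((k:ℝ) - 1/2) < 1
    have hkr : (k:ℝ) ≤ (n:ℝ) - 1 := by
      have : (k:ℝ) ≤ ((n-1 : ℕ) : ℝ) := by exact_mod_cast h2
      rwa [Nat.cast_sub (by omega), Nat.cast_one] at this
    have hhk : h * ((k:ℝ) - 1/2) < 1 := by
      have : h * ((k:ℝ) - 1/2) < h * ((n:ℝ) - 1) := by
        apply mul_lt_mul_of_pos_left _ hhpos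
        linarith
      rwa [hmul] at this
    have : u (k+1) = u k + h^2 * S k := by linarith
    rw [this]
    have hstep2 : h^2 * S k < h * M * u k := by
      have h1' : h^2 * S k < h^2 * (M * ((k:ℝ) - 1/2) * u k) :=
        mul_lt_mul_of_pos_left hSbound (by positivity)
      have h2' : h^2 * (M * ((k:ℝ) - 1/2) * u k) ≤ h * M * u k := by
        have : h^2 * (M * ((k:ℝ) - 1/2) * u k) = (h * ((k:ℝ) - 1/2)) * (h * M * u k) := by ring
        rw [this]
        nlinarith [mul_pos (mul_pos hhpos hMpos) hukpos]
      exact h1'.trans_le h2'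
    linarith [hstep2]
  -- iterate
  have hfin : ∀ k, 2 ≤ k → k ≤ n → u k < (1 + h * M) ^ (k - 1) * u 1 := by
    intro k hk
    induction k, hk using Nat.le_induction with
    | base =>
      intro _
      have := hgron 1 le_rfl (by omega)
      simpa using this
    | succ k hk ih =>
      intro hkn
      have hik := ih (by omega)
      have hg := hgron k (by omega) (by omega)
      have hpos : (0:ℝ) < 1 + h * M := by positivity
      have hpow : (1 + h * M) ^ (k + 1 - 1) = (1 + h * M) * (1 + h * M) ^ (k - 1) := by
        have h1 : k + 1 - 1 = (k - 1) + 1 := by omega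
        rw [h1, pow_succ]
        ring
      calc u (k+1) < (1 + h * M) * u k := hg
        _ < (1 + h * M) * ((1 + h * M) ^ (k - 1) * u 1) := by
            exact mul_lt_mul_of_pos_left hik hpos
        _ = (1 + h * M) ^ (k + 1 - 1) * u 1 := by rw [hpow]; ring
  have hfinal := hfin n hn le_rfl
  -- (1 + hM)^(n-1) ≤ exp M
  have hexp : (1 + h * M) ^ (n - 1) ≤ Real.exp M := by
    have h1 : 1 + h * M ≤ Real.exp (h * M) := by
      have := Real.add_one_le_exp (h * M)
      linarith
    have h2 : (1 + h * M) ^ (n-1) ≤ (Real.exp (h * M)) ^ (n-1) :=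
      pow_le_pow_left₀ (by positivity) h1 (n-1)
    have h3 : (Real.exp (h * M)) ^ (n-1) = Real.exp (((n-1 : ℕ):ℝ) * (h * M)) := by
      rw [Real.exp_nat_mul]
    have h4 : ((n-1 : ℕ):ℝ) * (h * M) = M := by
      rw [Nat.cast_sub (by omega), Nat.cast_one]
      rw [show ((n:ℝ) - 1) * (h * M) = (h * ((n:ℝ)-1)) * M by ring, hmul, one_mul]
    rw [h3, h4] at h2
    exact h2
  calc u n < (1 + h * M) ^ (n - 1) * u 1 := hfinal
    _ ≤ Real.exp M * u 1 := mul_le_mul_of_nonneg_right hexp hu1pos.le
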